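/- Let (u_n)_{n≥0} be a strictly increasing sequence of nonnegative reals with u₀ = 0 and u_n → +∞, and let δ : (−∞, 0] → [0,∞) be monotonically non-decreasing. If Σ_{n≥0} (u_{n+1} − u_n)² < ∞ and Σ_{n≥0} δ(−u_{n+1})² < ∞, then ∫_{−∞}^0 δ(t) dt < ∞. -/

import Mathlib

open Set MeasureTheory Filter

theorem stmt15 (u : ℕ → ℝ) (δ : ℝ → ℝ)
    (hu0 : u 0 = 0) (humono : StrictMono u) (hupos : ∀ n, 0 ≤ u n)
    (hutop : Tendsto u atTop atTop)
    (hδ0 : ∀ t ≤ (0:ℝ), 0 ≤ δ t)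
    (hδmono : MonotoneOn δ (Iic 0))
    (hsum1 : Summable (fun n => (u (n+1) - u n) ^ 2))
    (hsum2 : Summable (fun n => (δ (-(u (n+1)))) ^ 2)) :
    IntegrableOn δ (Iic 0) := by
  -- Summability of the products via AM-GM
  have hsum2' : Summable (fun n => (δ (-(u n))) ^ 2) := by
    rwa [← summable_nat_add_iff 1]
  have hc : Summable (fun n => (u (n+1) - u n) * δ (-(u n))) := by
    have hg : Summable (fun n => ((u (n+1) - u n) ^ 2 + δ (-(u n)) ^ 2) / 2) :=
      (hsum1.add hsum2').div_const 2
    refine Summable.of_nonneg_of_le ?_ ?_ hg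
    · intro n
      apply mul_nonneg (by linarith [humono (Nat.lt_succ_self n)])
      exact hδ0 _ (by simpa using hupos n)
    · intro n
      have := two_mul_le_add_sq (u (n+1) - u n) (δ (-(u n)))
      linarith
  have hcnn : ∀ n, 0 ≤ (u (n+1) - u n) * δ (-(u n)) := by
    intro n
    apply mul_nonneg (by linarith [humono (Nat.lt_succ_self n)])
    exact hδ0 _ (by simpa using hupos n)
  -- Covering Iic 0 by the intervals
  have hcover : Iic (0:ℝ) ⊆ ⋃ n, Ioc (-(u (n+1))) (-(u n)) := by
    intro t ht
    have hex : ∃ n, -(u (n+1)) < t := by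
      obtain ⟨N, hN⟩ := (hutop.eventually (eventually_gt_atTop (-t))).exists
      exact ⟨N, by linarith [humono.monotone (Nat.le_succ N)]⟩
    classical
    set n := Nat.find hex with hn_def
    have hn : -(u (n+1)) < t := Nat.find_spec hex
    refine mem_iUnion.2 ⟨n, hn, ?_⟩
    cases hn' : n with
    | zero => simpa [hu0] using ht
    | succ m =>
      exact not_lt.1 (Nat.find_min hex (by omega))
  constructor
  · exact (aemeasurable_restrict_of_monotoneOn measurableSet_Iic hδmono).aestronglyMeasurable
  · simp only [HasFiniteIntegral]
    have key : ∀ n, ∫⁻ t in Ioc (-(u (n+1))) (-(u n)), (‖δ t‖₊ : ENNReal)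
        ≤ ENNReal.ofReal ((u (n+1) - u n) * δ (-(u n))) := by
      intro n
      have hb : ∀ t ∈ Ioc (-(u (n+1))) (-(u n)), (‖δ t‖₊ : ENNReal) ≤ ENNReal.ofReal (δ (-(u n))) := by
        intro t ht
        have ht0 : t ≤ 0 := ht.2.trans (by simpa using hupos n)
        have h1 : δ t ≤ δ (-(u n)) :=
          hδmono ht0 (by simpa using hupos n) ht.2
        rw [← enorm_eq_nnnorm, Real.enorm_eq_ofReal (hδ0 t ht0)]
        exact ENNReal.ofReal_le_ofReal h1
      calc ∫⁻ t in Ioc (-(u (n+1))) (-(u n)), (‖δ t‖₊ : ENNReal)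
          ≤ ∫⁻ _ in Ioc (-(u (n+1))) (-(u n)), ENNReal.ofReal (δ (-(u n))) :=
            setLIntegral_mono' measurableSet_Ioc hb
        _ = ENNReal.ofReal (δ (-(u n))) * volume (Ioc (-(u (n+1))) (-(u n))) := by
            simp [lintegral_const]
        _ ≤ ENNReal.ofReal ((u (n+1) - u n) * δ (-(u n))) := by
            rw [Real.volume_Ioc, show -(u n) - -(u (n+1)) = u (n+1) - u n by ring,
              mul_comm, ← ENNReal.ofReal_mul (by linarith [humono (Nat.lt_succ_self n)])]
    calc ∫⁻ t in Iic (0:ℝ), (‖δ t‖₊ : ENNReal)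
        ≤ ∫⁻ t in ⋃ n, Ioc (-(u (n+1))) (-(u n)), (‖δ t‖₊ : ENNReal) :=
          lintegral_mono_set hcover
      _ ≤ ∑' n, ∫⁻ t in Ioc (-(u (n+1))) (-(u n)), (‖δ t‖₊ : ENNReal) := lintegral_iUnion_le _ _
      _ ≤ ∑' n, ENNReal.ofReal ((u (n+1) - u n) * δ (-(u n))) :=
          ENNReal.tsum_le_tsum key
      _ < ⊤ := by
          rw [← ENNReal.ofReal_tsum_of_nonneg hcnn hc]
          exact ENNReal.ofReal_lt_top
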